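/- Let G be an infinite unimodular transitive graph. For m ≥ 1, let ρ(m) be the smallest radius of a ball in G containing at least m vertices. Then for every finite nonempty vertex set K, |∂_V^{int} K| / |K| ≥ 1 / (2 ρ(2|K|)), where ∂_V^{int} K = {x ∈ K : there exists y ∉ K with y ~ x} is the internal vertex boundary. -/

import Mathlib

open scoped BigOperators ENNReal

attribute [local instance] Classical.propDecidable

noncomputable section

variable {V : Type*}

/-- The ball of radius `r` about `x` in graph distance. -/
def gBall (G : SimpleGraph V) (x : V) (r : ℕ) : Set V := {y | G.dist x y ≤ r}

/-- `ρ(m)`: the smallest radius of a ball in `G` containing at least `m` vertices. -/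
def smallestBallRadius (G : SimpleGraph V) (m : ℕ) : ℕ :=
  sInf {r : ℕ | ∃ x : V, m ≤ (gBall G x r).ncard}

/-- The internal vertex boundary of a finite set `K`. -/
def intVertexBdry (G : SimpleGraph V) (K : Finset V) : Finset V :=
  K.filter fun x => ∃ y, y ∉ K ∧ G.Adj x y

namespace IBAux

open SimpleGraph

variable {G : SimpleGraph V}

lemma dist_iso (g : G ≃g G) (x y : V) : G.dist (g x) (g y) = G.dist x y := by
  have h1 : ∀ (g : G ≃g G) (x y : V), G.dist (g x) (g y) ≤ G.dist x y := by
    intro g x y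
    by_cases hr : G.Reachable x y
    · obtain ⟨p, hp⟩ := hr.exists_walk_length_eq_dist
      calc G.dist (g x) (g y) ≤ (p.map g.toHom).length := SimpleGraph.dist_le _
        _ = G.dist x y := by rw [Walk.length_map, hp]
    · have h2 : ¬ G.Reachable (g x) (g y) := fun hr2 => hr (by simpa using hr2.map g.symm.toHom)
      rw [SimpleGraph.dist_eq_zero_of_not_reachable hr,
        SimpleGraph.dist_eq_zero_of_not_reachable h2]
  refine le_antisymm (h1 g x y) ?_
  have := h1 g.symm (g x) (g y)
  simpa using this

/-- number of geodesics from x to y, as an extended nonneg real -/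
def geoN (G : SimpleGraph V) (x y : V) : ℝ≥0∞ :=
  ∑' p : G.Walk x y, if p.length = G.dist x y then 1 else 0

/-- number of geodesics from x to y passing through z, z ≠ y -/
def geoCnt (G : SimpleGraph V) (x y z : V) : ℝ≥0∞ :=
  ∑' p : G.Walk x y, if p.length = G.dist x y ∧ z ∈ p.support ∧ z ≠ y then 1 else 0

def massW (G : SimpleGraph V) (ρ : ℕ) (x y z : V) : ℝ≥0∞ :=
  if G.dist x y ≤ ρ then geoCnt G x y z / geoN G x y else 0

def massF (G : SimpleGraph V) (ρ b : ℕ) (x z : V) : ℝ≥0∞ :=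
  (∑' y, massW G ρ x y z) / b

lemma walk_map_inj (g : G ≃g G) (x y : V) :
    Function.Injective (fun p : G.Walk x y => p.map g.toHom) :=
  Walk.map_injective_of_injective (fun a b h => g.injective h) x y

lemma geoN_iso (g : G ≃g G) (x y : V) : geoN G (g x) (g y) = geoN G x y := by
  have key : ∀ (g : G ≃g G) (x y : V), geoN G x y ≤ geoN G (g x) (g y) := by
    intro g x y
    have h := ENNReal.tsum_comp_le_tsum_of_injective (walk_map_inj g x y)
      (fun q : G.Walk (g x) (g y) => if q.length = G.dist (g x) (g y) then 1 else 0)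
    refine le_trans (le_of_eq (tsum_congr fun p => ?_)) h
    simp only [Walk.length_map, dist_iso]
  refine le_antisymm ?_ (key g x y)
  have := key g.symm (g x) (g y)
  simpa using this

lemma geoCnt_iso (g : G ≃g G) (x y z : V) : geoCnt G (g x) (g y) (g z) = geoCnt G x y z := by
  have key : ∀ (g : G ≃g G) (x y z : V), geoCnt G x y z ≤ geoCnt G (g x) (g y) (g z) := by
    intro g x y z
    have h := ENNReal.tsum_comp_le_tsum_of_injective (walk_map_inj g x y)
      (fun q : G.Walk (g x) (g y) =>
        if q.length = G.dist (g x) (g y) ∧ g z ∈ q.support ∧ g z ≠ g y then 1 else 0)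
    refine le_trans (le_of_eq (tsum_congr fun p => ?_)) h
    simp only [Walk.length_map, dist_iso, Walk.support_map]
    congr 1
    have hmem : g z ∈ List.map (⇑g.toHom) p.support ↔ z ∈ p.support := by
      constructor
      · intro hz
        obtain ⟨a, ha, hae⟩ := List.mem_map.mp hz
        have : a = z := g.injective hae
        rwa [this] at ha
      · intro hz; exact List.mem_map.mpr ⟨z, hz, rfl⟩
    have hne : (g z ≠ g y) ↔ (z ≠ y) := g.injective.ne_iff
    simp [hmem, hne]
  refine le_antisymm ?_ (key g x y z)
  have := key g.symm (g x) (g y) (g z)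
  simpa using this

lemma massW_iso (ρ : ℕ) (g : G ≃g G) (x y z : V) :
    massW G ρ (g x) (g y) (g z) = massW G ρ x y z := by
  unfold massW
  rw [dist_iso, geoCnt_iso, geoN_iso]

lemma massF_iso (ρ b : ℕ) (g : G ≃g G) (x z : V) :
    massF G ρ b (g x) (g z) = massF G ρ b x z := by
  unfold massF
  congr 1
  rw [← Equiv.tsum_eq g.toEquiv (fun y => massW G ρ (g x) y (g z))]
  exact tsum_congr fun y => massW_iso ρ g x y z

/- helpers on indicator tsums -/
lemma tsum_ite_eq_ncard {α : Type*} {P : α → Prop} [DecidablePred P] (h : {a | P a}.Finite) :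
    (∑' a, if P a then (1:ℝ≥0∞) else 0) = ({a | P a}.ncard : ℝ≥0∞) := by
  rw [tsum_eq_sum (s := h.toFinset) (by intro b hb; simp only [Set.Finite.mem_toFinset] at hb
                                        simpa using hb)]
  rw [Finset.sum_congr rfl (fun b hb => if_pos (show P b from h.mem_toFinset.mp hb)),
    Finset.sum_const, Set.ncard_eq_toFinset_card _ h]
  simp


lemma tsum_mem_finset {α : Type*} (s : Finset α) :
    (∑' a : α, if a ∈ s then (1:ℝ≥0∞) else 0) = (s.card : ℝ≥0∞) := by
  rw [tsum_ite_eq_ncard (P := fun a => a ∈ s) (by simpa using s.finite_toSet)]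
  norm_cast
  simpa using Set.ncard_coe_Finset s

section Core

variable (hG : G.Connected) {ρ b : ℕ} (hρ : 1 ≤ ρ)
  (hfin : ∀ x : V, (gBall G x ρ).Finite)
  (hcard : ∀ x : V, (gBall G x ρ).ncard = b) (hb0 : b ≠ 0)

include hρ hfin in
lemma geo_finite (x y : V) : {p : G.Walk x y | p.length = G.dist x y}.Finite := by
  haveI : DecidableEq V := Classical.decEq V
  haveI : G.LocallyFinite := fun v => Set.Finite.fintype
    (Set.Finite.subset (hfin v) (fun w hw => by
      show G.dist v w ≤ ρ
      have : G.dist v w = 1 := SimpleGraph.dist_eq_one_iff_adj.mpr hw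
      omega))
  exact Set.toFinite _

include hG in
lemma geoN_ne_zero (x y : V) : geoN G x y ≠ 0 := by
  obtain ⟨p, hp⟩ := hG.exists_walk_length_eq_dist x y
  have h := ENNReal.le_tsum (f := fun q : G.Walk x y =>
    if q.length = G.dist x y then (1:ℝ≥0∞) else 0) p
  rw [if_pos hp] at h
  intro h0
  rw [geoN] at h0
  rw [h0] at h
  simp at h

include hρ hfin in
lemma geoN_ne_top (x y : V) : geoN G x y ≠ ⊤ := by
  rw [geoN, tsum_ite_eq_ncard (geo_finite hρ hfin x y)]
  exact ENNReal.natCast_ne_top _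

include hρ hfin in
lemma cnt_sum_le (x y : V) :
    ∑' z : V, geoCnt G x y z ≤ (G.dist x y : ℝ≥0∞) * geoN G x y := by
  have hswap : ∑' z : V, geoCnt G x y z
      = ∑' p : G.Walk x y, ∑' z : V,
          if p.length = G.dist x y ∧ z ∈ p.support ∧ z ≠ y then (1:ℝ≥0∞) else 0 := by
    unfold geoCnt
    exact ENNReal.tsum_comm
  have hinner : ∀ p : G.Walk x y,
      (∑' z : V, if p.length = G.dist x y ∧ z ∈ p.support ∧ z ≠ y then (1:ℝ≥0∞) else 0)
        = if p.length = G.dist x y then ((p.support.toFinset.erase y).card : ℝ≥0∞) else 0 := by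
    intro p
    by_cases hp : p.length = G.dist x y
    · rw [if_pos hp, ← tsum_mem_finset (p.support.toFinset.erase y)]
      refine tsum_congr fun z => ?_
      refine if_congr ?_ rfl rfl
      simp [hp, Finset.mem_erase, List.mem_toFinset, and_comm]
    · simp [hp]
  have hcb : ∀ p : G.Walk x y, ((p.support.toFinset.erase y).card) ≤ p.length := by
    intro p
    have h1 : (p.support.toFinset.erase y).card = p.support.toFinset.card - 1 :=
      Finset.card_erase_of_mem (by simp [Walk.end_mem_support])
    have h2 : p.support.toFinset.card ≤ p.support.length := p.support.toFinset_card_le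
    have h3 : p.support.length = p.length + 1 := SimpleGraph.Walk.length_support p
    omega
  calc ∑' z : V, geoCnt G x y z
      = ∑' p : G.Walk x y, if p.length = G.dist x y
          then ((p.support.toFinset.erase y).card : ℝ≥0∞) else 0 := by
        rw [hswap]; exact tsum_congr hinner
    _ ≤ ∑' p : G.Walk x y, if p.length = G.dist x y then (G.dist x y : ℝ≥0∞) else 0 := by
        refine Summable.tsum_le_tsum (fun p => ?_) ENNReal.summable ENNReal.summable
        by_cases hp : p.length = G.dist x y
        · rw [if_pos hp, if_pos hp]
          exact_mod_cast hp ▸ hcb p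
        · simp [hp]
    _ = (G.dist x y : ℝ≥0∞) * geoN G x y := by
        unfold geoN
        rw [← ENNReal.tsum_mul_left]
        exact tsum_congr fun p => by split_ifs <;> simp

include hG hρ hfin in
lemma massW_sum_le (x y : V) :
    ∑' z : V, massW G ρ x y z ≤ if G.dist x y ≤ ρ then (ρ:ℝ≥0∞) else 0 := by
  by_cases hd : G.dist x y ≤ ρ
  · rw [if_pos hd]
    have heq : ∑' z : V, massW G ρ x y z = (∑' z : V, geoCnt G x y z) / geoN G x y := by
      unfold massW
      simp only [if_pos hd, div_eq_mul_inv]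
      rw [ENNReal.tsum_mul_right]
    rw [heq]
    refine ENNReal.div_le_of_le_mul ?_
    calc ∑' z : V, geoCnt G x y z ≤ (G.dist x y : ℝ≥0∞) * geoN G x y := cnt_sum_le hρ hfin x y
      _ ≤ (ρ:ℝ≥0∞) * geoN G x y := mul_le_mul_left (by exact_mod_cast hd) _
  · rw [if_neg hd]
    unfold massW
    simp [hd]

include hG hρ hfin hcard hb0 in
lemma outmass (x : V) : ∑' z : V, massF G ρ b x z ≤ (ρ:ℝ≥0∞) := by
  unfold massF
  have h1 : ∑' z : V, (∑' y, massW G ρ x y z) / (b:ℝ≥0∞)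
      = (∑' y : V, ∑' z : V, massW G ρ x y z) / (b:ℝ≥0∞) := by
    simp only [div_eq_mul_inv]
    rw [ENNReal.tsum_mul_right]
    congr 1
    exact ENNReal.tsum_comm
  rw [h1]
  refine ENNReal.div_le_of_le_mul ?_
  calc ∑' y : V, ∑' z : V, massW G ρ x y z
      ≤ ∑' y : V, (if G.dist x y ≤ ρ then (ρ:ℝ≥0∞) else 0) :=
        Summable.tsum_le_tsum (fun y => massW_sum_le hG hρ hfin x y) ENNReal.summable ENNReal.summable
    _ = (ρ:ℝ≥0∞) * ∑' y : V, (if G.dist x y ≤ ρ then (1:ℝ≥0∞) else 0) := by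
        rw [← ENNReal.tsum_mul_left]
        exact tsum_congr fun y => by split_ifs <;> simp
    _ = (ρ:ℝ≥0∞) * ((gBall G x ρ).ncard : ℝ≥0∞) := by
        rw [tsum_ite_eq_ncard (P := fun y => G.dist x y ≤ ρ) (hfin x)]
        rfl
    _ = (ρ:ℝ≥0∞) * (b:ℝ≥0∞) := by rw [hcard x]

lemma exists_exit (K : Finset V) {x y : V} (p : G.Walk x y) :
    x ∈ K → y ∉ K → ∃ z, z ∈ p.support ∧ z ≠ y ∧ z ∈ intVertexBdry G K := by
  induction p with
  | nil => intro hx hy; exact absurd hx hy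
  | @cons u v w h q ih =>
      intro hu hw
      by_cases hv : v ∈ K
      · obtain ⟨z, hz1, hz2, hz3⟩ := ih hv hw
        exact ⟨z, by simp [Walk.support_cons, hz1], hz2, hz3⟩
      · refine ⟨u, by simp [Walk.support_cons], fun he => hw (he ▸ hu), ?_⟩
        simp only [intVertexBdry, Finset.mem_filter]
        exact ⟨hu, v, hv, h⟩

include hG hρ hfin in
lemma gather_y (K : Finset V) {x y : V} (hx : x ∈ K) (hy : y ∉ K) (hd : G.dist x y ≤ ρ) :
    (1:ℝ≥0∞) ≤ ∑ z ∈ intVertexBdry G K, massW G ρ x y z := by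
  have hsum : ∑ z ∈ intVertexBdry G K, massW G ρ x y z
      = (∑ z ∈ intVertexBdry G K, geoCnt G x y z) / geoN G x y := by
    unfold massW
    simp only [if_pos hd, div_eq_mul_inv, ← Finset.sum_mul]
  rw [hsum, ENNReal.le_div_iff_mul_le (Or.inl (geoN_ne_zero hG x y))
    (Or.inl (geoN_ne_top hρ hfin x y)), one_mul]
  have hswap : ∑ z ∈ intVertexBdry G K, geoCnt G x y z
      = ∑' p : G.Walk x y, ∑ z ∈ intVertexBdry G K,
          (if p.length = G.dist x y ∧ z ∈ p.support ∧ z ≠ y then (1:ℝ≥0∞) else 0) := by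
    unfold geoCnt
    rw [Summable.tsum_finsetSum (fun i _ => ENNReal.summable)]
  rw [hswap]
  unfold geoN
  refine Summable.tsum_le_tsum (fun p => ?_) ENNReal.summable ENNReal.summable
  by_cases hp : p.length = G.dist x y
  · rw [if_pos hp]
    obtain ⟨z₀, hz1, hz2, hz3⟩ := exists_exit K p hx hy
    have hterm : (1:ℝ≥0∞)
        = (if p.length = G.dist x y ∧ z₀ ∈ p.support ∧ z₀ ≠ y then (1:ℝ≥0∞) else 0) := by
      rw [if_pos ⟨hp, hz1, hz2⟩]
    refine le_trans (le_of_eq hterm) (Finset.single_le_sum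
      (f := fun z => if p.length = G.dist x y ∧ z ∈ p.support ∧ z ≠ y then (1:ℝ≥0∞) else 0)
      (fun i _ => zero_le) hz3)
  · rw [if_neg hp]
    exact zero_le

include hG hρ hfin hcard hb0 in
lemma gather (K : Finset V) (hKb : 2 * K.card ≤ b) {x : V} (hx : x ∈ K) :
    (1:ℝ≥0∞)/2 ≤ ∑ z ∈ intVertexBdry G K, massF G ρ b x z := by
  have h1 : ∑ z ∈ intVertexBdry G K, massF G ρ b x z
      = (∑' y : V, ∑ z ∈ intVertexBdry G K, massW G ρ x y z) / (b:ℝ≥0∞) := by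
    unfold massF
    simp only [div_eq_mul_inv, ← Finset.sum_mul]
    rw [← Summable.tsum_finsetSum (fun i _ => ENNReal.summable)]
  have h3 : ∀ y : V, (if y ∈ gBall G x ρ \ ↑K then (1:ℝ≥0∞) else 0)
      ≤ ∑ z ∈ intVertexBdry G K, massW G ρ x y z := by
    intro y
    by_cases hy : y ∈ gBall G x ρ \ ↑K
    · rw [if_pos hy]
      exact gather_y hG hρ hfin K hx (by simpa using hy.2) hy.1
    · simp [hy]
  have h4 : (((gBall G x ρ \ ↑K).ncard : ℝ≥0∞))
      ≤ ∑' y : V, ∑ z ∈ intVertexBdry G K, massW G ρ x y z := by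
    have h5 := Summable.tsum_le_tsum h3 ENNReal.summable ENNReal.summable
    rwa [tsum_ite_eq_ncard (P := fun y => y ∈ gBall G x ρ \ ↑K)
      ((hfin x).subset Set.diff_subset), Set.setOf_mem_eq] at h5
  have hm : b ≤ 2 * (gBall G x ρ \ ↑K).ncard := by
    have hsub : gBall G x ρ ⊆ (gBall G x ρ \ ↑K) ∪ ↑K := by
      intro t ht
      by_cases h : t ∈ (K : Set V) <;> simp [ht, h]
    have hA := Set.ncard_le_ncard hsub (((hfin x).diff).union K.finite_toSet)
    have hun := Set.ncard_union_le (gBall G x ρ \ ↑K) (↑K : Set V)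
    have hKc : ((↑K : Set V)).ncard = K.card := Set.ncard_coe_finset K
    have hbx := hcard x
    omega
  rw [h1, ENNReal.le_div_iff_mul_le (Or.inl (by exact_mod_cast hb0))
    (Or.inl (ENNReal.natCast_ne_top b))]
  calc (1/2 : ℝ≥0∞) * (b:ℝ≥0∞) ≤ (1/2 : ℝ≥0∞) * ((2 * (gBall G x ρ \ ↑K).ncard : ℕ) : ℝ≥0∞) :=
        mul_le_mul_right (by exact_mod_cast hm) _
    _ = (((gBall G x ρ \ ↑K).ncard : ℕ) : ℝ≥0∞) := by
        push_cast
        rw [← mul_assoc, one_div, ENNReal.inv_mul_cancel two_ne_zero ENNReal.ofNat_ne_top, one_mul]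
    _ ≤ _ := h4

include hG hρ hfin hcard hb0 in
lemma main_bound (K : Finset V) (hKb : 2 * K.card ≤ b)
    (hMTP : ∀ F : V → V → ℝ≥0∞,
      (∀ (g : G ≃g G) (x y : V), F (g x) (g y) = F x y) →
      ∀ o : V, ∑' x : V, F x o = ∑' y : V, F o y) :
    (K.card : ℝ≥0∞) ≤ 2 * (ρ:ℝ≥0∞) * ((intVertexBdry G K).card : ℝ≥0∞) := by
  have hMTPF := hMTP (massF G ρ b) (fun g x y => massF_iso ρ b g x y)
  calc (K.card : ℝ≥0∞) = ∑ _x ∈ K, (1:ℝ≥0∞) := by simp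
    _ = ∑ _x ∈ K, 2 * ((1:ℝ≥0∞)/2) := by
        refine Finset.sum_congr rfl fun x _ => ?_
        rw [one_div, ENNReal.mul_inv_cancel two_ne_zero ENNReal.ofNat_ne_top]
    _ ≤ ∑ x ∈ K, 2 * (∑ z ∈ intVertexBdry G K, massF G ρ b x z) :=
        Finset.sum_le_sum (fun x hx =>
          mul_le_mul_right (gather hG hρ hfin hcard hb0 K hKb hx) 2)
    _ = 2 * ∑ x ∈ K, ∑ z ∈ intVertexBdry G K, massF G ρ b x z := by rw [Finset.mul_sum]
    _ = 2 * ∑ z ∈ intVertexBdry G K, ∑ x ∈ K, massF G ρ b x z := by rw [Finset.sum_comm]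
    _ ≤ 2 * ∑ z ∈ intVertexBdry G K, ∑' x : V, massF G ρ b x z :=
        mul_le_mul_right (Finset.sum_le_sum fun z _ => ENNReal.sum_le_tsum K) 2
    _ = 2 * ∑ z ∈ intVertexBdry G K, ∑' y : V, massF G ρ b z y := by
        exact congrArg _ (Finset.sum_congr rfl fun z _ => hMTPF z)
    _ ≤ 2 * ∑ z ∈ intVertexBdry G K, (ρ:ℝ≥0∞) :=
        mul_le_mul_right (Finset.sum_le_sum fun z _ => outmass hG hρ hfin hcard hb0 z) 2
    _ = 2 * (ρ:ℝ≥0∞) * ((intVertexBdry G K).card : ℝ≥0∞) := by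
        rw [Finset.sum_const, nsmul_eq_mul]
        ring

end Core


end IBAux

/-- in an infinite unimodular transitive graph (unimodularity is
taken in the form of the Mass-Transport Principle),
`|∂_V^{int} K| / |K| ≥ 1/(2 ρ(2|K|))` for every finite nonempty `K`. -/
theorem intBdry_card_div_card_ge
    [Infinite V] (G : SimpleGraph V) (hG : G.Connected)
    (htrans : ∀ x y : V, ∃ g : G ≃g G, g x = y)
    (hMTP : ∀ F : V → V → ℝ≥0∞,
      (∀ (g : G ≃g G) (x y : V), F (g x) (g y) = F x y) →
      ∀ o : V, ∑' x : V, F x o = ∑' y : V, F o y)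
    (K : Finset V) (hK : K.Nonempty) :
    (1 : ℝ) / (2 * (smallestBallRadius G (2 * K.card) : ℝ))
      ≤ (intVertexBdry G K).card / K.card := by
  by_cases hne : {r : ℕ | ∃ x : V, 2 * K.card ≤ (gBall G x r).ncard}.Nonempty
  · set ρ := smallestBallRadius G (2 * K.card) with hρdef
    have hρS : ρ ∈ {r : ℕ | ∃ x : V, 2 * K.card ≤ (gBall G x r).ncard} := Nat.sInf_mem hne
    obtain ⟨x₀, hx₀⟩ := hρS
    have hK1 : 1 ≤ K.card := hK.card_pos
    have hρ1 : 1 ≤ ρ := by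
      by_contra h
      have h0 : ρ = 0 := by omega
      rw [h0] at hx₀
      have hsing : gBall G x₀ 0 = {x₀} := by
        ext y
        simp [gBall, Nat.le_zero, hG.dist_eq_zero_iff, eq_comm]
      rw [hsing, Set.ncard_singleton] at hx₀
      omega
    have hfin₀ : (gBall G x₀ ρ).Finite := by
      by_contra h
      rw [Set.Infinite.ncard (fun hfin => h hfin)] at hx₀
      omega
    set b := (gBall G x₀ ρ).ncard with hbdef
    have himg : ∀ g : G ≃g G, ∀ (x : V) (r : ℕ), (g '' gBall G x r) = gBall G (g x) r := by
      intro g x r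
      ext y
      constructor
      · rintro ⟨w, hw, rfl⟩
        show G.dist (g x) (g w) ≤ r
        rw [IBAux.dist_iso g x w]
        exact hw
      · intro hy
        refine ⟨g.symm y, ?_, by simp⟩
        show G.dist x (g.symm y) ≤ r
        have h2 : G.dist (g.symm (g x)) (g.symm y) = G.dist (g x) y :=
          IBAux.dist_iso g.symm (g x) y
        simp only [RelIso.symm_apply_apply] at h2
        rw [h2]
        exact hy
    have hball : ∀ x : V, (gBall G x ρ).Finite ∧ (gBall G x ρ).ncard = b := by
      intro x
      obtain ⟨g, hg⟩ := htrans x₀ x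
      have h1 : gBall G x ρ = g '' gBall G x₀ ρ := by rw [himg, hg]
      rw [h1]
      exact ⟨hfin₀.image _, by rw [Set.ncard_image_of_injective _ g.injective]⟩
    have hb0 : b ≠ 0 := by omega
    have hmain := IBAux.main_bound hG hρ1 (fun x => (hball x).1) (fun x => (hball x).2) hb0
      K hx₀ hMTP
    have hnat : K.card ≤ 2 * ρ * (intVertexBdry G K).card := by exact_mod_cast hmain
    have hρR : (0:ℝ) < (ρ:ℝ) := by exact_mod_cast hρ1
    have hKR : (0:ℝ) < (K.card:ℝ) := by exact_mod_cast hK1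
    rw [div_le_div_iff₀ (by positivity) hKR]
    have : (K.card : ℝ) ≤ 2 * (ρ:ℝ) * ((intVertexBdry G K).card : ℝ) := by exact_mod_cast hnat
    nlinarith
  · have h0 : smallestBallRadius G (2 * K.card) = 0 := by
      unfold smallestBallRadius
      rw [Set.not_nonempty_iff_eq_empty.mp hne, Nat.sInf_empty]
    rw [h0]
    norm_num
    positivity


end
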